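/- If u is a uniformly recurrent infinite word with no weak bispecial factor, then #R(w) ≥ 1 + ΔC(|w|) for every factor w of u, where ΔC(n) = C(n+1) − C(n). -/

import Mathlib

variable {A : Type*}

/-- The factor of `u` of length `n` starting at position `j`. -/
def factorAt (u : ℕ → A) (j n : ℕ) : List A :=
  (List.range n).map (fun i => u (j + i))

/-- `j` is an occurrence of the finite word `w` in `u`. -/
def OccursAt (u : ℕ → A) (w : List A) (j : ℕ) : Prop :=
  factorAt u j w.length = w

/-- `w` is a factor of the infinite word `u`. -/
def IsFactor (u : ℕ → A) (w : List A) : Prop :=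
  ∃ j, OccursAt u w j

/-- `v` is a return word of `w` in `u`: the word between two successive occurrences of `w`. -/
def IsReturnWord (u : ℕ → A) (w v : List A) : Prop :=
  ∃ j k, j < k ∧ OccursAt u w j ∧ OccursAt u w k ∧
    (∀ l, j < l → l < k → ¬ OccursAt u w l) ∧ v = factorAt u j (k - j)

/-- The set `R(w)` of return words of `w` in `u`. -/
def returnWords (u : ℕ → A) (w : List A) : Set (List A) :=
  {v | IsReturnWord u w v}

/-- Property `R_m`: every factor of `u` has exactly `m` return words. -/
def PropertyR (u : ℕ → A) (m : ℕ) : Prop :=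
  ∀ w, IsFactor u w → (returnWords u w).Finite ∧ (returnWords u w).ncard = m

/-- The set of left extensions of `w`. -/
def leftExt (u : ℕ → A) (w : List A) : Set A := {a | IsFactor u (a :: w)}

/-- The set of right extensions of `w`. -/
def rightExt (u : ℕ → A) (w : List A) : Set A := {b | IsFactor u (w ++ [b])}

def LeftSpecial (u : ℕ → A) (w : List A) : Prop := 2 ≤ (leftExt u w).ncard

def RightSpecial (u : ℕ → A) (w : List A) : Prop := 2 ≤ (rightExt u w).ncard

/-- The set of pairs `(a, b)` such that `a w b` is a factor of `u`. -/
def extPairs (u : ℕ → A) (w : List A) : Set (A × A) :=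
  {p | IsFactor u (p.1 :: (w ++ [p.2]))}

/-- The bilateral order `B(w)`. -/
noncomputable def bilateralOrder (u : ℕ → A) (w : List A) : ℤ :=
  ((extPairs u w).ncard : ℤ) - (leftExt u w).ncard - (rightExt u w).ncard + 1

/-- `w` is a weak bispecial factor of `u`. -/
def WeakBispecial (u : ℕ → A) (w : List A) : Prop :=
  IsFactor u w ∧ bilateralOrder u w < 0

/-- The factor complexity of `u`. -/
noncomputable def Complexity (u : ℕ → A) (n : ℕ) : ℕ :=
  {w : List A | w.length = n ∧ IsFactor u w}.ncard

/-- `u` is recurrent: every factor occurs at least twice. -/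
def Recurrent (u : ℕ → A) : Prop :=
  ∀ w, IsFactor u w → ∃ j k, j < k ∧ OccursAt u w j ∧ OccursAt u w k

/-- `u` is uniformly recurrent. -/
def UniformlyRecurrent (u : ℕ → A) : Prop :=
  ∀ n : ℕ, ∃ N : ℕ, ∀ w, IsFactor u w → w.length = N →
    ∀ v, IsFactor u v → v.length = n → v <:+: w

def EventuallyPeriodic (u : ℕ → A) : Prop :=
  ∃ p, 0 < p ∧ ∃ N, ∀ n, N ≤ n → u (n + p) = u n

/-- `w` is a maximal right special factor. -/
def MaximalRightSpecial (u : ℕ → A) (w : List A) : Prop :=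
  IsFactor u w ∧ RightSpecial u w ∧
    ∀ v, IsFactor u v → RightSpecial u v → w <:+ v → v = w

/-- The return word `v` of `w` starts with the letter `b`. -/
def StartsWithLetter (w v : List A) (b : A) : Prop := (w ++ [b]) <+: (v ++ w)

section AuxList
variable {u : ℕ → A}

lemma length_factorAt (u : ℕ → A) (j n : ℕ) : (factorAt u j n).length = n := by
  simp [factorAt]

lemma factorAt_add (u : ℕ → A) (j m k : ℕ) :
    factorAt u j (m + k) = factorAt u j m ++ factorAt u (j + m) k := by
  simp only [factorAt, List.range_add, List.map_append, List.map_map]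
  congr 1
  ext i
  simp [Function.comp, add_assoc]

lemma factorAt_drop (u : ℕ → A) {t m : ℕ} (j : ℕ) (h : t ≤ m) :
    (factorAt u j m).drop t = factorAt u (j + t) (m - t) := by
  obtain ⟨k, rfl⟩ : ∃ k, m = t + k := ⟨m - t, by omega⟩
  have h1 : (factorAt u j t ++ factorAt u (j + t) k).drop t = factorAt u (j + t) k := by
    have := List.drop_left (l₁ := factorAt u j t) (l₂ := factorAt u (j + t) k)
    rwa [length_factorAt] at this
  rw [factorAt_add, h1]
  congr 1
  omega

lemma factorAt_take (u : ℕ → A) {t m : ℕ} (j : ℕ) (h : t ≤ m) :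
    (factorAt u j m).take t = factorAt u j t := by
  obtain ⟨k, rfl⟩ : ∃ k, m = t + k := ⟨m - t, by omega⟩
  have h1 : (factorAt u j t ++ factorAt u (j + t) k).take t = factorAt u j t := by
    have := List.take_left (l₁ := factorAt u j t) (l₂ := factorAt u (j + t) k)
    rwa [length_factorAt] at this
  rw [factorAt_add, h1]

lemma factorAt_one (u : ℕ → A) (j : ℕ) : factorAt u j 1 = [u j] := by
  unfold factorAt
  norm_num [List.range_succ]

lemma occursAt_factorAt (u : ℕ → A) (j n : ℕ) : OccursAt u (factorAt u j n) j := by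
  simp [OccursAt, length_factorAt]

lemma isFactor_factorAt (u : ℕ → A) (j n : ℕ) : IsFactor u (factorAt u j n) :=
  ⟨j, occursAt_factorAt u j n⟩

lemma occursAt_append {s t : List A} {j : ℕ} (h : OccursAt u (s ++ t) j) :
    OccursAt u s j ∧ OccursAt u t (j + s.length) := by
  unfold OccursAt at h ⊢
  rw [List.length_append] at h
  have hl := factorAt_add u j s.length t.length
  rw [h] at hl
  obtain ⟨h1, h2⟩ := List.append_inj hl (by rw [length_factorAt])
  exact ⟨h1.symm, h2.symm⟩

lemma IsFactor.infix {s t : List A} (h : IsFactor u t) (hi : s <:+: t) : IsFactor u s := by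
  obtain ⟨p, q, hpq⟩ := hi
  obtain ⟨j, hj⟩ := h
  rw [← hpq, List.append_assoc] at hj
  have h1 := (occursAt_append hj).2
  exact ⟨j + p.length, (occursAt_append h1).1⟩

/-- `w` occurs inside the list `q` at position `t`. -/
def OccIn (w q : List A) (t : ℕ) : Prop :=
  t + w.length ≤ q.length ∧ (q.drop t).take w.length = w

lemma drop_take_eq_factorAt {q : List A} {l : ℕ} (hq : OccursAt u q l) {t m : ℕ}
    (h : t + m ≤ q.length) :
    (q.drop t).take m = factorAt u (l + t) m := by
  unfold OccursAt at hq
  conv_lhs => rw [← hq]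
  rw [factorAt_drop u l (by omega), factorAt_take u (l + t) (by omega)]

lemma occIn_iff_occursAt {w q : List A} {l t : ℕ} (hq : OccursAt u q l)
    (ht : t + w.length ≤ q.length) :
    OccIn w q t ↔ OccursAt u w (l + t) := by
  unfold OccIn OccursAt
  rw [drop_take_eq_factorAt hq ht]
  exact ⟨fun h => h.2, fun h => ⟨ht, h⟩⟩

lemma occIn_append_right {w q r : List A} {t : ℕ} (h : t + w.length ≤ q.length) :
    OccIn w (q ++ r) t ↔ OccIn w q t := by
  unfold OccIn
  rw [List.drop_append_of_le_length (by omega),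
    List.take_append_of_le_length (by rw [List.length_drop]; omega), List.length_append]
  constructor
  · rintro ⟨-, h2⟩; exact ⟨h, h2⟩
  · rintro ⟨-, h2⟩; exact ⟨by omega, h2⟩

lemma occIn_cons_succ {w s : List A} {a : A} {t : ℕ} :
    OccIn w (a :: s) (t + 1) ↔ OccIn w s t := by
  unfold OccIn
  rw [List.drop_succ_cons, List.length_cons]
  constructor
  · rintro ⟨h1, h2⟩; exact ⟨by omega, h2⟩
  · rintro ⟨h1, h2⟩; exact ⟨by omega, h2⟩

lemma suffix_eq_of_length {x y z : List A} (hx : x <:+ z) (hy : y <:+ z)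
    (h : x.length = y.length) : x = y := by
  obtain ⟨p, rfl⟩ := hx
  obtain ⟨q, hq⟩ := hy
  have hlen : q.length = p.length := by
    have := congrArg List.length hq
    simp only [List.length_append] at this
    omega
  exact ((List.append_inj hq hlen).2).symm ▸ rfl

lemma exists_cons_suffix_of_suffix {s z : List A} (h : s <:+ z) (hne : z ≠ s) :
    ∃ a, (a :: s) <:+ z := by
  obtain ⟨p, rfl⟩ := h
  have hp : p ≠ [] := by rintro rfl; simp at hne
  refine ⟨p.getLast hp, p.dropLast, ?_⟩
  rw [show p.dropLast ++ p.getLast hp :: s = (p.dropLast ++ [p.getLast hp]) ++ s by simp,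
    List.dropLast_append_getLast hp]

end AuxList

section Main
variable {u : ℕ → A}

lemma exists_right_letter {s : List A} (h : IsFactor u s) : ∃ b, IsFactor u (s ++ [b]) := by
  obtain ⟨j, hj⟩ := h
  refine ⟨u (j + s.length), j, ?_⟩
  unfold OccursAt at hj ⊢
  rw [List.length_append, List.length_singleton, factorAt_add, hj, factorAt_one]

lemma one_le_d [Finite A] {s : List A} (h : IsFactor u s) : 1 ≤ (rightExt u s).ncard := by
  obtain ⟨b, hb⟩ := exists_right_letter h
  exact (Set.ncard_pos (Set.toFinite _)).mpr ⟨b, hb⟩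

lemma exists_occ_ge (hur : UniformlyRecurrent u) {s : List A} (h : IsFactor u s) (p : ℕ) :
    ∃ j, p ≤ j ∧ OccursAt u s j := by
  obtain ⟨N, hN⟩ := hur s.length
  obtain ⟨pre, suf, hps⟩ :=
    hN _ (isFactor_factorAt u p N) (length_factorAt u p N) s h rfl
  have hocc : OccursAt u (factorAt u p N) p := occursAt_factorAt u p N
  rw [← hps, List.append_assoc] at hocc
  exact ⟨p + pre.length, by omega, (occursAt_append (occursAt_append hocc).2).1⟩

lemma exists_left_letter (hur : UniformlyRecurrent u) {s : List A} (h : IsFactor u s) :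
    ∃ a, IsFactor u (a :: s) := by
  obtain ⟨j, hj1, hj⟩ := exists_occ_ge hur h 1
  refine ⟨u (j - 1), j - 1, ?_⟩
  unfold OccursAt at hj ⊢
  rw [List.length_cons, show s.length + 1 = 1 + s.length by omega, factorAt_add,
    show j - 1 + 1 = j by omega, hj]
  rw [factorAt_one, List.singleton_append]

lemma interior_occ {w : List A} {N : ℕ}
    (hN : ∀ y, IsFactor u y → y.length = N → w <:+: y)
    {q : List A} (hq : IsFactor u q) (hlen : N + 1 ≤ q.length) :
    ∃ t, 1 ≤ t ∧ OccIn w q t := by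
  obtain ⟨l, hl⟩ := hq
  obtain ⟨pre, suf, hps⟩ :=
    hN (factorAt u (l + 1) N) (isFactor_factorAt _ _ _) (length_factorAt _ _ _)
  have hlens : pre.length + w.length + suf.length = N := by
    have := congrArg List.length hps
    simp only [List.length_append, length_factorAt] at this
    omega
  have hocc : OccursAt u (factorAt u (l + 1) N) (l + 1) := occursAt_factorAt _ _ _
  rw [← hps, List.append_assoc] at hocc
  have hw : OccursAt u w (l + 1 + pre.length) := (occursAt_append (occursAt_append hocc).2).1
  refine ⟨1 + pre.length, by omega, ?_⟩
  rw [occIn_iff_occursAt hl (by omega), show l + (1 + pre.length) = l + 1 + pre.length by omega]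
  exact hw

end Main

/-- If `u` is uniformly recurrent with no weak bispecial factor, then
`#R(w) ≥ 1 + ΔC(|w|)` for every factor `w` of `u`. -/
theorem card_returnWords_ge [Fintype A] (u : ℕ → A) (hur : UniformlyRecurrent u)
    (hwb : ∀ w, ¬ WeakBispecial u w) :
    ∀ w, IsFactor u w →
      1 + ((Complexity u (w.length + 1) : ℤ) - (Complexity u w.length : ℤ)) ≤
        ((returnWords u w).ncard : ℤ) := by
  classical
  intro w hw
  have hB : ∀ s : List A, IsFactor u s → 0 ≤ bilateralOrder u s := by
    intro s hs
    by_contra hneg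
    exact hwb s ⟨hs, by omega⟩
  obtain ⟨N, hN0⟩ := hur w.length
  have hN : ∀ y, IsFactor u y → y.length = N → w <:+: y := fun y hy hl => hN0 y hy hl w hw rfl
  set T : Set (List A) :=
    {q | IsFactor u q ∧ w <+: q ∧ ∀ t, 1 ≤ t → ¬ OccIn w q t} with hT
  set CR : Set (List A) :=
    {q | IsFactor u q ∧ w.length < q.length ∧ OccIn w q 0 ∧ OccIn w q (q.length - w.length) ∧
      ∀ t, 1 ≤ t → t < q.length - w.length → ¬ OccIn w q t} with hCRdef
  have hTfin : T.Finite := by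
    apply (List.finite_length_le A N).subset
    intro q hq
    simp only [Set.mem_setOf_eq]
    by_contra hlong
    obtain ⟨t, ht1, ht2⟩ := interior_occ hN hq.1 (by omega)
    exact hq.2.2 t ht1 ht2
  have hCRfin : CR.Finite := by
    apply (List.finite_length_le A (N + 1)).subset
    intro q hq
    simp only [Set.mem_setOf_eq]
    by_contra hlong
    have hlong' : N + 2 ≤ q.length := by omega
    have hne : q ≠ [] := by
      intro h
      rw [h] at hlong'
      simp at hlong'
    have hdl : IsFactor u q.dropLast := hq.1.infix (List.dropLast_prefix q).isInfix
    obtain ⟨t, ht1, ht2⟩ := interior_occ hN hdl (by rw [List.length_dropLast]; omega)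
    have hb2 : t + w.length ≤ q.dropLast.length := ht2.1
    have hoccq : OccIn w q t := by
      have h3 := (occIn_append_right (r := [q.getLast hne]) hb2).mpr ht2
      rwa [List.dropLast_append_getLast hne] at h3
    rw [List.length_dropLast] at hb2
    exact hq.2.2.2.2 t ht1 (by omega) hoccq
  set Tf : Finset (List A) := hTfin.toFinset with hTfdef
  set CRf : Finset (List A) := hCRfin.toFinset with hCRfdef
  have hwT : w ∈ T := ⟨hw, List.prefix_rfl, fun t ht hocc => by have := hocc.1; omega⟩
  have hlen1 : ∀ q', q' ∈ T ∨ q' ∈ CR → q' ≠ w → w.length + 1 ≤ q'.length := by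
    intro q' hq' hne
    rcases hq' with h | h
    · have hle := h.2.1.length_le
      rcases Nat.lt_or_ge w.length q'.length with hl | hg
      · omega
      · exact absurd (h.2.1.eq_of_length (by omega)) (fun e => hne e.symm)
    · have := h.2.1; omega
  have hchild : ∀ q, q ∈ T → ∀ b, b ∈ rightExt u q → (q ++ [b]) ∈ T ∨ (q ++ [b]) ∈ CR := by
    intro q hqT b hb
    obtain ⟨hqf, hpre, hnoc⟩ := hqT
    have hnq : w.length ≤ q.length := hpre.length_le
    by_cases hc : OccIn w (q ++ [b]) (q.length + 1 - w.length)
    · right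
      refine ⟨hb, by simp; omega, ?_, ?_, ?_⟩
      · refine ⟨by simp; omega, ?_⟩
        rw [List.drop_zero, List.take_append_of_le_length hnq]
        exact (List.prefix_iff_eq_take.mp hpre).symm
      · have he : (q ++ [b]).length - w.length = q.length + 1 - w.length := by simp
        rw [he]; exact hc
      · intro t ht1 ht2
        have ht2' : t + w.length ≤ q.length := by
          simp only [List.length_append, List.length_singleton] at ht2
          omega
        rw [occIn_append_right ht2']
        exact hnoc t ht1
    · left
      refine ⟨hb, hpre.trans (List.prefix_append q [b]), ?_⟩
      intro t ht1 hocc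
      have hle : t + w.length ≤ q.length + 1 := by
        have := hocc.1
        simpa using this
      rcases Nat.lt_or_ge (t + w.length) (q.length + 1) with hlt | hge
      · exact hnoc t ht1 ((occIn_append_right (by omega)).mp hocc)
      · have he : t = q.length + 1 - w.length := by omega
        rw [he] at hocc
        exact hc hocc
  have hparentT : ∀ q', q' ∈ T ∨ q' ∈ CR → q' ≠ w → q'.dropLast ∈ T := by
    intro q' hq' hne
    have hf : IsFactor u q' := by rcases hq' with h | h; exacts [h.1, h.1]
    have hfd : IsFactor u q'.dropLast := hf.infix (List.dropLast_prefix q').isInfix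
    have hlen : w.length + 1 ≤ q'.length := hlen1 q' hq' hne
    have hnen : q' ≠ [] := by intro h; rw [h] at hlen; simp at hlen
    have hqd : q'.dropLast ++ [q'.getLast hnen] = q' := List.dropLast_append_getLast hnen
    have hwpre : w <+: q' := by
      rcases hq' with h | h
      · exact h.2.1
      · rw [List.prefix_iff_eq_take]
        have h0 := h.2.2.1.2
        rw [List.drop_zero] at h0
        exact h0.symm
    refine ⟨hfd, ?_, ?_⟩
    · rw [List.prefix_iff_eq_take]
      have hwq := List.prefix_iff_eq_take.mp hwpre
      rw [← hqd, List.take_append_of_le_length (by rw [List.length_dropLast]; omega)] at hwq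
      exact hwq
    · intro t ht hocc
      have hb2 : t + w.length ≤ q'.dropLast.length := hocc.1
      have hoccq : OccIn w q' t := by
        have h3 := (occIn_append_right (r := [q'.getLast hnen]) hb2).mpr hocc
        rwa [hqd] at h3
      rw [List.length_dropLast] at hb2
      rcases hq' with h | h
      · exact h.2.2 t ht hoccq
      · exact h.2.2.2.2 t ht (by omega) hoccq
  have hwTf : w ∈ Tf := (hTfin.mem_toFinset).mpr hwT
  set S : Finset (List A) := (Tf ∪ CRf).erase w with hSdef
  have hmemS : ∀ q', q' ∈ S ↔ (q' ∈ T ∨ q' ∈ CR) ∧ q' ≠ w := by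
    intro q'
    rw [hSdef, Finset.mem_erase, Finset.mem_union, hTfin.mem_toFinset, hCRfin.mem_toFinset]
    tauto
  have hmaps : ∀ q' ∈ S, q'.dropLast ∈ Tf := by
    intro q' hq'
    rw [hmemS] at hq'
    exact (hTfin.mem_toFinset).mpr (hparentT q' hq'.1 hq'.2)
  have hfibcard : ∀ q ∈ Tf, (S.filter fun q' => q'.dropLast = q).card = (rightExt u q).ncard := by
    intro q hq
    have hqT : q ∈ T := (hTfin.mem_toFinset).mp hq
    have himg : ((S.filter fun q' => q'.dropLast = q) : Set (List A))
        = (fun b => q ++ [b]) '' rightExt u q := by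
      ext q'
      simp only [Finset.coe_filter, Set.mem_setOf_eq, Set.mem_image]
      constructor
      · rintro ⟨hq'S, hdrop⟩
        rw [hmemS] at hq'S
        have hlenq : w.length + 1 ≤ q'.length := hlen1 q' hq'S.1 hq'S.2
        have hnen : q' ≠ [] := by intro h; rw [h] at hlenq; simp at hlenq
        have hqd : q'.dropLast ++ [q'.getLast hnen] = q' := List.dropLast_append_getLast hnen
        refine ⟨q'.getLast hnen, ?_, ?_⟩
        · show IsFactor u (q ++ [q'.getLast hnen])
          rw [← hdrop, hqd]
          rcases hq'S.1 with h | h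
          exacts [h.1, h.1]
        · rw [← hdrop, hqd]
      · rintro ⟨b, hb, rfl⟩
        have hmem := hchild q hqT b hb
        refine ⟨?_, List.dropLast_concat⟩
        rw [hmemS]
        refine ⟨hmem, ?_⟩
        intro he
        have hlc := congrArg List.length he
        simp only [List.length_append, List.length_singleton] at hlc
        have := hqT.2.1.length_le
        omega
    have h4 := congrArg Set.ncard himg
    rwa [Set.ncard_coe_finset,
      Set.ncard_image_of_injective _ (fun b b' hbe => by
        have := List.append_cancel_left hbe
        simpa using this)] at h4
  have hsum1 : ∑ q ∈ Tf, (rightExt u q).ncard = S.card := by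
    rw [Finset.card_eq_sum_card_fiberwise hmaps]
    exact (Finset.sum_congr rfl hfibcard).symm
  have hdisjf : Disjoint Tf CRf := by
    rw [Finset.disjoint_left]
    intro q hqT hqC
    have h1 : q ∈ T := (hTfin.mem_toFinset).mp hqT
    have h2 : q ∈ CR := (hCRfin.mem_toFinset).mp hqC
    exact h1.2.2 (q.length - w.length) (by have := h2.2.1; omega) h2.2.2.2.1
  have hScard : S.card + 1 = Tf.card + CRf.card := by
    rw [hSdef, Finset.card_erase_of_mem (Finset.mem_union_left _ hwTf),
      Finset.card_union_of_disjoint hdisjf]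
    have h1 : 1 ≤ Tf.card := Finset.card_pos.mpr ⟨w, hwTf⟩
    omega
  have hcount1 : (CRf.card : ℤ) = 1 + ∑ q ∈ Tf, (((rightExt u q).ncard : ℤ) - 1) := by
    have h1 : (∑ q ∈ Tf, ((rightExt u q).ncard : ℤ)) = (S.card : ℤ) := by exact_mod_cast hsum1
    rw [Finset.sum_sub_distrib, Finset.sum_const, nsmul_eq_mul, mul_one, h1]
    have h2 : (S.card : ℤ) + 1 = (Tf.card : ℤ) + (CRf.card : ℤ) := by exact_mod_cast hScard
    linarith
  have hCReq : CR = (fun v : List A => v ++ w) '' returnWords u w := by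
    ext q
    constructor
    · rintro ⟨⟨l, hl⟩, hlen, h0, hend, hint⟩
      have hnq : w.length ≤ q.length := by omega
      have hocc0 : OccursAt u w l := by
        have h5 := (occIn_iff_occursAt hl (by omega)).mp h0
        simpa using h5
      have hocck : OccursAt u w (l + (q.length - w.length)) :=
        (occIn_iff_occursAt hl (by omega)).mp hend
      refine ⟨factorAt u l (q.length - w.length),
        ⟨l, l + (q.length - w.length), by omega, hocc0, hocck, ?_, by congr 1; omega⟩, ?_⟩
      · intro l' hl1 hl2 hocc'
        have h6 : OccIn w q (l' - l) := (occIn_iff_occursAt hl (by omega)).mpr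
          (by rwa [show l + (l' - l) = l' by omega])
        exact hint (l' - l) (by omega) (by omega) h6
      · show factorAt u l (q.length - w.length) ++ w = q
        have ht : q.take (q.length - w.length) = factorAt u l (q.length - w.length) := by
          have h7 := drop_take_eq_factorAt hl (t := 0) (m := q.length - w.length) (by omega)
          simpa using h7
        have hd2 : q.drop (q.length - w.length) = w := by
          have hlen2 : (q.drop (q.length - w.length)).length = w.length := by
            rw [List.length_drop]; omega
          have h8 := drop_take_eq_factorAt hl (t := q.length - w.length) (m := w.length)
            (by omega)
          rw [List.take_of_length_le (le_of_eq hlen2)] at h8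
          rw [h8]
          exact hocck
        calc factorAt u l (q.length - w.length) ++ w
            = q.take (q.length - w.length) ++ q.drop (q.length - w.length) := by rw [ht, hd2]
          _ = q := List.take_append_drop _ q
    · rintro ⟨v, ⟨j, k, hjk, hj, hk, hmid, rfl⟩, rfl⟩
      have hq : factorAt u j (k - j) ++ w = factorAt u j ((k - j) + w.length) := by
        rw [factorAt_add]
        congr 1
        rw [show j + (k - j) = k by omega]
        exact hk.symm
      have hoccq : OccursAt u (factorAt u j (k - j) ++ w) j := by
        have h9 : OccursAt u (factorAt u j ((k - j) + w.length)) j := occursAt_factorAt _ _ _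
        rwa [← hq] at h9
      have hlq : (factorAt u j (k - j) ++ w).length = (k - j) + w.length := by
        rw [List.length_append, length_factorAt]
      show (factorAt u j (k - j) ++ w) ∈ CR
      refine ⟨⟨j, hoccq⟩, by rw [hlq]; omega, ?_, ?_, ?_⟩
      · rw [occIn_iff_occursAt hoccq (by rw [hlq]; omega)]
        simpa using hj
      · rw [hlq, show (k - j) + w.length - w.length = k - j by omega,
          occIn_iff_occursAt hoccq hlq.ge, show j + (k - j) = k by omega]
        exact hk
      · intro t ht1 ht2
        rw [hlq] at ht2
        intro hocc
        have h10 := (occIn_iff_occursAt hoccq (by rw [hlq]; omega)).mp hocc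
        exact hmid (j + t) (by omega) (by omega) h10
  have hinj : Function.Injective (fun v : List A => v ++ w) := by
    intro a b h
    simpa using (List.append_left_inj w).mp h
  have hRfin : (returnWords u w).Finite := by
    have h11 : ((fun v : List A => v ++ w) '' returnWords u w).Finite := hCReq ▸ hCRfin
    exact Set.Finite.of_finite_image h11 hinj.injOn
  have hRcard : (returnWords u w).ncard = CRf.card := by
    rw [← Set.ncard_image_of_injective _ hinj, ← hCReq, hCRfdef]
    exact Set.ncard_eq_toFinset_card CR hCRfin
  have hFfin : ∀ m : ℕ, {v : List A | v.length = m ∧ IsFactor u v}.Finite := fun m =>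
    (List.finite_length_le A m).subset fun v hv => le_of_eq hv.1
  have hdelta : (Complexity u (w.length + 1) : ℤ) - (Complexity u w.length : ℤ)
      = ∑ x ∈ (hFfin w.length).toFinset, (((rightExt u x).ncard : ℤ) - 1) := by
    have hm : ∀ x' ∈ (hFfin (w.length + 1)).toFinset, x'.dropLast ∈ (hFfin w.length).toFinset := by
      intro x' hx'
      rw [Set.Finite.mem_toFinset] at hx' ⊢
      exact ⟨by rw [List.length_dropLast, hx'.1]; omega,
        hx'.2.infix (List.dropLast_prefix x').isInfix⟩
    have hfib : ∀ x ∈ (hFfin w.length).toFinset,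
        (((hFfin (w.length + 1)).toFinset).filter fun x' => x'.dropLast = x).card
          = (rightExt u x).ncard := by
      intro x hx
      rw [Set.Finite.mem_toFinset] at hx
      have himg : ((((hFfin (w.length + 1)).toFinset).filter fun x' => x'.dropLast = x) :
          Set (List A)) = (fun b => x ++ [b]) '' rightExt u x := by
        ext x'
        simp only [Finset.coe_filter, Set.mem_setOf_eq, Set.Finite.mem_toFinset, Set.mem_image]
        constructor
        · rintro ⟨⟨hlen, hfac⟩, hdrop⟩
          have hnen : x' ≠ [] := by intro h; rw [h] at hlen; simp at hlen
          have hqd : x'.dropLast ++ [x'.getLast hnen] = x' := List.dropLast_append_getLast hnen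
          refine ⟨x'.getLast hnen, ?_, ?_⟩
          · show IsFactor u (x ++ [x'.getLast hnen])
            rw [← hdrop, hqd]
            exact hfac
          · rw [← hdrop, hqd]
        · rintro ⟨b, hb, rfl⟩
          exact ⟨⟨by rw [List.length_append, List.length_singleton, hx.1], hb⟩,
            List.dropLast_concat⟩
      have h4 := congrArg Set.ncard himg
      rwa [Set.ncard_coe_finset,
        Set.ncard_image_of_injective _ (fun b b' hbe => by
          have := List.append_cancel_left hbe
          simpa using this)] at h4
    have hsucc : Complexity u (w.length + 1)
        = ∑ x ∈ (hFfin w.length).toFinset, (rightExt u x).ncard := by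
      rw [show Complexity u (w.length + 1) = ((hFfin (w.length + 1)).toFinset).card from
        Set.ncard_eq_toFinset_card _ _]
      rw [Finset.card_eq_sum_card_fiberwise hm]
      exact Finset.sum_congr rfl hfib
    have hcn : Complexity u w.length = ((hFfin w.length).toFinset).card :=
      Set.ncard_eq_toFinset_card _ _
    rw [hsucc, hcn, Finset.sum_sub_distrib, Finset.sum_const, nsmul_eq_mul, mul_one]
    push_cast
    ring
  have hnonnegT : ∀ z ∈ Tf, (0 : ℤ) ≤ ((rightExt u z).ncard : ℤ) - 1 := by
    intro z hz
    have h1 := one_le_d (u := u) (((hTfin.mem_toFinset).mp hz).1)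
    have h2 : (1 : ℤ) ≤ ((rightExt u z).ncard : ℤ) := by exact_mod_cast h1
    linarith
  have hmain : ∀ K : ℕ, ∀ s : List A, IsFactor u s → w.length ≤ s.length →
      (∀ t, 1 ≤ t → ¬ OccIn w s t) → N + 1 - s.length ≤ K →
      ((rightExt u s).ncard : ℤ) - 1
        ≤ ∑ z ∈ Tf.filter (fun z => s <:+ z), (((rightExt u z).ncard : ℤ) - 1) := by
    intro K
    induction K with
    | zero =>
      intro s hs hsl hocc hK
      exfalso
      obtain ⟨t, ht1, ht2⟩ := interior_occ hN hs (by omega)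
      exact hocc t ht1 ht2
    | succ K ih =>
      intro s hs hsl hocc hK
      by_cases hpre : w <+: s
      · have hsT : s ∈ T := ⟨hs, hpre, hocc⟩
        have hsf : s ∈ Tf.filter (fun z => s <:+ z) := by
          rw [Finset.mem_filter]
          exact ⟨(hTfin.mem_toFinset).mpr hsT, List.suffix_rfl⟩
        exact Finset.single_le_sum (fun z hz => hnonnegT z (Finset.mem_filter.mp hz).1) hsf
      · have hslen : s.length ≤ N := by
          by_contra hgt
          obtain ⟨t, ht1, ht2⟩ := interior_occ hN hs (by omega)
          exact hocc t ht1 ht2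
        have hlfin : (leftExt u s).Finite := Set.toFinite _
        have hpfin : (extPairs u s).Finite := Set.toFinite _
        have hmapsE : ∀ p ∈ hpfin.toFinset, p.1 ∈ hlfin.toFinset := by
          intro p hp
          rw [Set.Finite.mem_toFinset] at hp ⊢
          exact hp.infix ⟨[], [p.2], by simp⟩
        have hfibE : ∀ a ∈ hlfin.toFinset, (hpfin.toFinset.filter fun p => p.1 = a).card
            = (rightExt u (a :: s)).ncard := by
          intro a ha
          have himg : ((hpfin.toFinset.filter fun p => p.1 = a) : Set (A × A))
              = (fun b => (a, b)) '' rightExt u (a :: s) := by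
            ext p
            simp only [Finset.coe_filter, Set.mem_setOf_eq, Set.Finite.mem_toFinset,
              Set.mem_image]
            constructor
            · rintro ⟨hp, hpa⟩
              refine ⟨p.2, ?_, ?_⟩
              · have hp' : IsFactor u (p.1 :: (s ++ [p.2])) := hp
                rw [hpa] at hp'
                show IsFactor u ((a :: s) ++ [p.2])
                rw [List.cons_append]
                exact hp' 
              · exact Prod.ext hpa.symm rfl
            · rintro ⟨b, hb, rfl⟩
              refine ⟨?_, rfl⟩
              show IsFactor u (a :: (s ++ [b]))
              rw [← List.cons_append]
              exact hb
          have h4 := congrArg Set.ncard himg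
          rwa [Set.ncard_coe_finset,
            Set.ncard_image_of_injective _ (fun b b' hbe => by simpa using hbe)] at h4
        have hpairsum : (extPairs u s).ncard
            = ∑ a ∈ hlfin.toFinset, (rightExt u (a :: s)).ncard := by
          rw [Set.ncard_eq_toFinset_card _ hpfin, Finset.card_eq_sum_card_fiberwise hmapsE]
          exact Finset.sum_congr rfl hfibE
        have hkey : ((rightExt u s).ncard : ℤ) - 1
            ≤ ∑ a ∈ hlfin.toFinset, (((rightExt u (a :: s)).ncard : ℤ) - 1) := by
          have hb := hB s hs
          simp only [bilateralOrder] at hb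
          have h1 : (∑ a ∈ hlfin.toFinset, ((rightExt u (a :: s)).ncard : ℤ))
              = ((extPairs u s).ncard : ℤ) := by exact_mod_cast hpairsum.symm
          have h2 : ((hlfin.toFinset).card : ℤ) = ((leftExt u s).ncard : ℤ) := by
            rw [Set.ncard_eq_toFinset_card _ hlfin]
          rw [Finset.sum_sub_distrib, Finset.sum_const, nsmul_eq_mul, mul_one, h1, h2]
          linarith
        have hstep2 : ∀ a ∈ hlfin.toFinset, (((rightExt u (a :: s)).ncard : ℤ) - 1)
            ≤ ∑ z ∈ Tf.filter (fun z => (a :: s) <:+ z), (((rightExt u z).ncard : ℤ) - 1) := by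
          intro a ha
          have hafac : IsFactor u (a :: s) := (hlfin.mem_toFinset).mp ha
          refine ih (a :: s) hafac (by rw [List.length_cons]; omega) ?_
            (by rw [List.length_cons]; omega)
          intro t ht hocc2
          rcases Nat.exists_eq_add_of_le ht with ⟨t', rfl⟩
          rw [show 1 + t' = t' + 1 by omega, occIn_cons_succ] at hocc2
          rcases Nat.eq_zero_or_pos t' with rfl | hpos
          · refine hpre ?_
            rw [List.prefix_iff_eq_take]
            have h5 := hocc2.2
            rw [List.drop_zero] at h5
            exact h5.symm
          · exact hocc t' (by omega) hocc2
        have hdisj2 : (↑(hlfin.toFinset) : Set A).PairwiseDisjoint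
            (fun a => Tf.filter (fun z => (a :: s) <:+ z)) := by
          intro a _ a' _ hne
          simp only [Function.onFun]
          rw [Finset.disjoint_left]
          intro z hz hz'
          have h1 := (Finset.mem_filter.mp hz).2
          have h2 := (Finset.mem_filter.mp hz').2
          have h3 := suffix_eq_of_length h1 h2 (by simp)
          injection h3 with h4 h5
          exact hne h4
        calc ((rightExt u s).ncard : ℤ) - 1
            ≤ ∑ a ∈ hlfin.toFinset, (((rightExt u (a :: s)).ncard : ℤ) - 1) := hkey
          _ ≤ ∑ a ∈ hlfin.toFinset,
              ∑ z ∈ Tf.filter (fun z => (a :: s) <:+ z), (((rightExt u z).ncard : ℤ) - 1) :=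
            Finset.sum_le_sum hstep2
          _ = ∑ z ∈ hlfin.toFinset.biUnion (fun a => Tf.filter (fun z => (a :: s) <:+ z)),
              (((rightExt u z).ncard : ℤ) - 1) := (Finset.sum_biUnion hdisj2).symm
          _ ≤ ∑ z ∈ Tf.filter (fun z => s <:+ z), (((rightExt u z).ncard : ℤ) - 1) := by
            apply Finset.sum_le_sum_of_subset_of_nonneg
            · intro z hz
              obtain ⟨a, _, hz2⟩ := Finset.mem_biUnion.mp hz
              rw [Finset.mem_filter] at hz2 ⊢
              exact ⟨hz2.1, (List.suffix_cons a s).trans hz2.2⟩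
            · intro z hz _
              exact hnonnegT z (Finset.mem_filter.mp hz).1
  have hcore : ∑ x ∈ (hFfin w.length).toFinset, (((rightExt u x).ncard : ℤ) - 1)
      ≤ ∑ q ∈ Tf, (((rightExt u q).ncard : ℤ) - 1) := by
    have hbound : ∀ x ∈ (hFfin w.length).toFinset, ((rightExt u x).ncard : ℤ) - 1
        ≤ ∑ z ∈ Tf.filter (fun z => x <:+ z), (((rightExt u z).ncard : ℤ) - 1) := by
      intro x hx
      rw [Set.Finite.mem_toFinset] at hx
      refine hmain (N + 1) x hx.2 (le_of_eq hx.1.symm) ?_ (by omega)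
      intro t ht hocc
      have h5 := hocc.1
      rw [hx.1] at h5
      omega
    have hdisj3 : (↑((hFfin w.length).toFinset) : Set (List A)).PairwiseDisjoint
        (fun x => Tf.filter (fun z => x <:+ z)) := by
      intro x hx x' hx' hne
      simp only [Function.onFun]
      rw [Finset.disjoint_left]
      intro z hz hz'
      have hx1 := ((hFfin w.length).mem_toFinset.mp (Finset.mem_coe.mp hx)).1
      have hx'1 := ((hFfin w.length).mem_toFinset.mp (Finset.mem_coe.mp hx')).1
      exact hne (suffix_eq_of_length (Finset.mem_filter.mp hz).2 (Finset.mem_filter.mp hz').2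
        (by rw [hx1, hx'1]))
    calc ∑ x ∈ (hFfin w.length).toFinset, (((rightExt u x).ncard : ℤ) - 1)
        ≤ ∑ x ∈ (hFfin w.length).toFinset,
            ∑ z ∈ Tf.filter (fun z => x <:+ z), (((rightExt u z).ncard : ℤ) - 1) :=
          Finset.sum_le_sum hbound
      _ = ∑ z ∈ ((hFfin w.length).toFinset).biUnion (fun x => Tf.filter (fun z => x <:+ z)),
            (((rightExt u z).ncard : ℤ) - 1) := (Finset.sum_biUnion hdisj3).symm
      _ ≤ ∑ q ∈ Tf, (((rightExt u q).ncard : ℤ) - 1) := by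
        apply Finset.sum_le_sum_of_subset_of_nonneg
        · intro z hz
          obtain ⟨x, _, hz2⟩ := Finset.mem_biUnion.mp hz
          exact (Finset.mem_filter.mp hz2).1
        · intro z hz _
          exact hnonnegT z hz
  rw [hRcard, hdelta]
  linarith [hcore, hcount1]
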